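/- arXiv:2311.05802 — 2 statements merged into one kernel-verified Lean document; each statement's English description precedes it below -/
import Mathlib

section
/- Suppose h : ℝⁿ → ℝ is bounded above by M > 0, and the stochastic closed-loop system satisfies E[h(x_{k+1}) | x_k] ≥ α·h(x_k) for some α ∈ (0,1) whenever h(x_k) ≥ 0. Then the K-step exit probability satisfies P(min_{0≤k≤K} h(x_k) < 0) ≤ 1 − (h(x₀)/M)·α^K, for any initial condition x₀ with h(x₀) ≥ 0. -/
open MeasureTheory

/-- K-step exit probability bound for a stochastic system satisfying the
expectation DTCBF condition. -/
theorem k_step_exit_probability_bound {n : ℕ}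
    {Ω : Type*} {m0 : MeasurableSpace Ω} (P : Measure Ω) [IsProbabilityMeasure P]
    (ℱ : Filtration ℕ m0)
    (X : ℕ → Ω → EuclideanSpace ℝ (Fin n))
    (hadapted : ∀ k, Measurable[ℱ k] (X k))
    (h : EuclideanSpace ℝ (Fin n) → ℝ) (hcont : Continuous h)
    (M : ℝ) (hM : 0 < M) (hbdd : ∀ x, h x ≤ M)
    (α : ℝ) (hα : α ∈ Set.Ioo (0 : ℝ) 1)
    (hint : ∀ k, Integrable (fun ω => h (X k ω)) P)
    (hcbf : ∀ k, (fun ω => α * h (X k ω)) ≤ᵐ[P] P[fun ω => h (X (k + 1) ω)|ℱ k])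
    (x0 : EuclideanSpace ℝ (Fin n)) (hX0 : X 0 = fun _ => x0)
    (h0 : 0 ≤ h x0) (K : ℕ) :
    P {ω | ∃ k ≤ K, h (X k ω) < 0} ≤ ENNReal.ofReal (1 - h x0 / M * α ^ K) := by
  obtain ⟨hα0, hα1⟩ := hα
  set S : ℕ → Set Ω := fun k => {ω | ∀ j ≤ k, 0 ≤ h (X j ω)} with hS
  -- measurability
  have hSm : ∀ k, MeasurableSet[ℱ k] (S k) := by
    intro k
    have : S k = ⋂ j, ⋂ (_ : j ≤ k), {ω | 0 ≤ h (X j ω)} := by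
      ext ω; simp [hS]
    rw [this]
    refine MeasurableSet.iInter fun j => MeasurableSet.iInter fun hj => ?_
    have hXj : Measurable[ℱ k] (X j) := (hadapted j).mono (ℱ.mono hj) le_rfl
    exact (hcont.measurable.comp hXj) measurableSet_Ici
  have hSm0 : ∀ k, MeasurableSet (S k) := fun k => (ℱ.le k) _ (hSm k)
  -- succ decomposition
  have hSsucc : ∀ k, S (k + 1) = S k ∩ {ω | 0 ≤ h (X (k + 1) ω)} := by
    intro k; ext ω
    constructor
    · intro hω
      exact ⟨fun j hj => hω j (hj.trans (Nat.le_succ k)), hω (k + 1) le_rfl⟩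
    · rintro ⟨h1, h2⟩ j hj
      rcases eq_or_lt_of_le hj with rfl | hlt
      · exact h2
      · exact h1 j (Nat.lt_succ_iff.mp hlt)
  -- main induction
  have key : ∀ k, α ^ k * h x0 ≤ ∫ ω in S k, h (X k ω) ∂P := by
    intro k
    induction k with
    | zero =>
      have hS0 : S 0 = Set.univ := by
        ext ω; simp only [hS, Set.mem_setOf_eq, Set.mem_univ, iff_true]
        intro j hj
        interval_cases j
        rw [hX0]; exact h0
      rw [hS0]
      simp only [Measure.restrict_univ, pow_zero, one_mul, hX0]
      rw [integral_const]
      simp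
    | succ k ih =>
      have step1 : α ^ (k + 1) * h x0 ≤ α * ∫ ω in S k, h (X k ω) ∂P := by
        rw [pow_succ, mul_comm (α ^ k) α, mul_assoc]
        exact mul_le_mul_of_nonneg_left ih hα0.le
      have step2 : α * ∫ ω in S k, h (X k ω) ∂P
          ≤ ∫ ω in S k, (P[fun ω => h (X (k + 1) ω)|ℱ k]) ω ∂P := by
        rw [← integral_const_mul]
        refine setIntegral_mono_ae ((hint k).const_mul α).integrableOn
          integrable_condExp.integrableOn ?_
        exact hcbf k
      have step3 : ∫ ω in S k, (P[fun ω => h (X (k + 1) ω)|ℱ k]) ω ∂P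
          = ∫ ω in S k, h (X (k + 1) ω) ∂P :=
        setIntegral_condExp (ℱ.le k) (hint (k + 1)) (hSm k)
      have step4 : ∫ ω in S k, h (X (k + 1) ω) ∂P
          ≤ ∫ ω in S (k + 1), h (X (k + 1) ω) ∂P := by
        obtain ⟨D, hD⟩ : ∃ D, D = S k ∩ {ω | h (X (k + 1) ω) < 0} := ⟨_, rfl⟩
        have hdecomp : S k = S (k + 1) ∪ D := by
          rw [hD]
          rw [hSsucc k]
          ext ω
          simp only [Set.mem_union, Set.mem_inter_iff, Set.mem_setOf_eq]
          constructor
          · intro hω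
            rcases le_or_gt 0 (h (X (k + 1) ω)) with hp | hn
            · exact Or.inl ⟨hω, hp⟩
            · exact Or.inr ⟨hω, hn⟩
          · rintro (⟨hω, _⟩ | ⟨hω, _⟩) <;> exact hω
        have hmneg : MeasurableSet D := by
          rw [hD]
          refine (hSm0 k).inter ?_
          exact (hcont.measurable.comp ((hadapted (k+1)).mono (ℱ.le (k+1)) le_rfl))
            measurableSet_Iio
        have hdisj : Disjoint (S (k + 1)) D := by
          rw [hD, Set.disjoint_left]
          rintro ω hω ⟨_, hneg⟩
          exact absurd (hω (k + 1) le_rfl) (not_le.mpr hneg)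
        calc ∫ ω in S k, h (X (k + 1) ω) ∂P
            = ∫ ω in S (k + 1), h (X (k + 1) ω) ∂P
              + ∫ ω in D, h (X (k + 1) ω) ∂P := by
              rw [hdecomp]
              exact setIntegral_union hdisj hmneg (hint (k+1)).integrableOn
                (hint (k+1)).integrableOn
          _ ≤ ∫ ω in S (k + 1), h (X (k + 1) ω) ∂P := by
              have : ∫ ω in D, h (X (k + 1) ω) ∂P ≤ 0 := by
                refine setIntegral_nonpos hmneg fun ω hω => ?_
                rw [hD] at hω
                exact hω.2.le
              linarith
      linarith
  -- from key at K to the conclusion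
  have hIK : α ^ K * h x0 ≤ M * (P (S K)).toReal := by
    refine (key K).trans ?_
    calc ∫ ω in S K, h (X K ω) ∂P ≤ ∫ _ in S K, M ∂P :=
          setIntegral_mono_on (hint K).integrableOn ((integrableOn_const_iff (C := M)).mpr
            (Or.inr (measure_lt_top _ _))) (hSm0 K) fun ω _ => hbdd _
      _ = M * (P (S K)).toReal := by
          rw [setIntegral_const, smul_eq_mul, mul_comm]; rfl
  have hset : {ω | ∃ k ≤ K, h (X k ω) < 0} = (S K)ᶜ := by
    ext ω
    simp only [Set.mem_setOf_eq, Set.mem_compl_iff, hS, not_forall, not_le]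
    constructor
    · rintro ⟨k, hk, hneg⟩; exact ⟨k, hk, hneg⟩
    · rintro ⟨k, hk, hneg⟩; exact ⟨k, hk, hneg⟩
  rw [hset, measure_compl (hSm0 K) (measure_ne_top _ _), measure_univ]
  have hc : h x0 / M * α ^ K ≤ (P (S K)).toReal := by
    rw [div_mul_eq_mul_div, div_le_iff₀ hM, mul_comm (h x0)]
    linarith [hIK]
  have hc0 : 0 ≤ h x0 / M * α ^ K := by positivity
  have : ENNReal.ofReal (h x0 / M * α ^ K) ≤ P (S K) := by
    rw [← ENNReal.ofReal_toReal (measure_ne_top P (S K))]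
    exact ENNReal.ofReal_le_ofReal hc
  calc (1 : ENNReal) - P (S K) ≤ 1 - ENNReal.ofReal (h x0 / M * α ^ K) :=
        tsub_le_tsub_left this 1
    _ = ENNReal.ofReal (1 - h x0 / M * α ^ K) := by
        rw [ENNReal.ofReal_sub _ hc0, ENNReal.ofReal_one]
end

section
/- Let h be a DTCBF satisfying h(F(x,k(x)) + E[d|x]) − (λ_max/2)·tr(cov(d|x)) ≥ α·h(x) for all x in C. If h is C², concave, with sup h ≤ M and ‖∇²h(x)‖₂ ≤ λ_max everywhere, then E[h(F(x,k(x)) + d) | x] ≥ α·h(x) for all x ∈ C. -/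
open MeasureTheory Set

section Aux
variable {E : Type*} [NormedAddCommGroup E] [NormedSpace ℝ E]

lemma line_hasDerivAt' (a v : E) (t : ℝ) :
    HasDerivAt (fun t : ℝ => a + t • v) v t := by
  simpa using ((hasDerivAt_id t).smul_const v).const_add a

lemma comp_line_hasDerivAt' {h : E → ℝ} (hd : Differentiable ℝ h) (a v : E) (t : ℝ) :
    HasDerivAt (fun t : ℝ => h (a + t • v)) (fderiv ℝ h (a + t • v) v) t :=
  (hd (a + t • v)).hasFDerivAt.comp_hasDerivAt t (line_hasDerivAt' a v t)

lemma fderiv_line_hasDerivAt' {h : E → ℝ} (hC2 : ContDiff ℝ 2 h) (a v : E) (t : ℝ) :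
    HasDerivAt (fun t : ℝ => fderiv ℝ h (a + t • v) v)
      (fderiv ℝ (fderiv ℝ h) (a + t • v) v v) t := by
  have hΦ : Differentiable ℝ (fderiv ℝ h) :=
    (hC2.fderiv_right (m := 1) (le_refl _)).differentiable one_ne_zero
  have h1 : HasDerivAt (fun t : ℝ => fderiv ℝ h (a + t • v))
      (fderiv ℝ (fderiv ℝ h) (a + t • v) v) t :=
    (hΦ (a + t • v)).hasFDerivAt.comp_hasDerivAt t (line_hasDerivAt' a v t)
  exact ((ContinuousLinearMap.apply ℝ ℝ v).hasFDerivAt.comp_hasDerivAt t h1)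

lemma second_along_bound' {h : E → ℝ} {lam : ℝ}
    (hH : ∀ x, ‖iteratedFDeriv ℝ 2 h x‖ ≤ lam) (z v : E) :
    |fderiv ℝ (fderiv ℝ h) z v v| ≤ lam * ‖v‖ ^ 2 := by
  have := iteratedFDeriv_two_apply (𝕜 := ℝ) h z ![v, v]
  simp only [Matrix.cons_val_zero, Matrix.cons_val_one, Matrix.head_cons] at this
  rw [← this]
  calc |iteratedFDeriv ℝ 2 h z ![v, v]| ≤ ‖iteratedFDeriv ℝ 2 h z‖ * ∏ i, ‖(![v, v]) i‖ :=
        (iteratedFDeriv ℝ 2 h z).le_opNorm _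
    _ ≤ lam * ‖v‖ ^ 2 := by
        rw [Fin.prod_univ_two]
        simp only [Matrix.cons_val_zero, Matrix.cons_val_one, Matrix.head_cons]
        rw [← sq]
        exact mul_le_mul_of_nonneg_right (hH z) (by positivity)

/-- Pointwise quadratic lower bound for a `C²` function with bounded Hessian. -/
lemma taylor_quadratic_lb {h : E → ℝ} {lam : ℝ} (hC2 : ContDiff ℝ 2 h)
    (hH : ∀ x, ‖iteratedFDeriv ℝ 2 h x‖ ≤ lam) (a v : E) :
    h a + fderiv ℝ h a v - lam / 2 * ‖v‖ ^ 2 ≤ h (a + v) := by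
  have hd : Differentiable ℝ h := hC2.differentiable two_ne_zero
  set g' : ℝ → ℝ := fun t => fderiv ℝ h (a + t • v) v with hg'
  have hlip : ∀ t ∈ Icc (0:ℝ) 1, |g' t - g' 0| ≤ lam * ‖v‖ ^ 2 * t := by
    intro t ht
    have := norm_image_sub_le_of_norm_deriv_le_segment'
      (f := g') (f' := fun s => fderiv ℝ (fderiv ℝ h) (a + s • v) v v) (a := 0) (b := 1)
      (fun s _ => (fderiv_line_hasDerivAt' hC2 a v s).hasDerivWithinAt)
      (fun s _ => second_along_bound' hH (a + s • v) v) t ht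
    simpa using this
  set ψ : ℝ → ℝ := fun t => h (a + t • v) - t * g' 0 + lam * ‖v‖ ^ 2 * t ^ 2 / 2 with hψ
  have hψd : ∀ t : ℝ, HasDerivAt ψ (g' t - g' 0 + lam * ‖v‖ ^ 2 * t) t := by
    intro t
    have h1 := comp_line_hasDerivAt' hd a v t
    have h2 : HasDerivAt (fun t : ℝ => t * g' 0) (g' 0) t := by
      simpa using (hasDerivAt_id t).mul_const (g' 0)
    have h3 : HasDerivAt (fun t : ℝ => lam * ‖v‖ ^ 2 * t ^ 2 / 2) (lam * ‖v‖ ^ 2 * t) t := by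
      have := ((hasDerivAt_pow 2 t).const_mul (lam * ‖v‖ ^ 2)).div_const 2
      refine this.congr_deriv ?_
      ring
    exact (h1.sub h2).add h3
  have hmono : MonotoneOn ψ (Icc (0:ℝ) 1) := by
    apply monotoneOn_of_deriv_nonneg (convex_Icc 0 1)
    · exact fun t _ => ((hψd t).continuousAt).continuousWithinAt
    · exact fun t _ => ((hψd t).differentiableAt).differentiableWithinAt
    · intro t ht
      rw [interior_Icc] at ht
      rw [(hψd t).deriv]
      have := hlip t ⟨le_of_lt ht.1, le_of_lt ht.2⟩
      have h2 := neg_abs_le (g' t - g' 0)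
      linarith
  have h01 := hmono (left_mem_Icc.2 zero_le_one) (right_mem_Icc.2 zero_le_one) zero_le_one
  have e0 : ψ 0 = h a := by simp [hψ]
  have e1 : ψ 1 = h (a + v) - g' 0 + lam * ‖v‖ ^ 2 / 2 := by simp [hψ]
  have eg : g' 0 = fderiv ℝ h a v := by simp [hg']
  rw [e0, e1, eg] at h01
  linarith

end Aux

/-- if the Jensen-enhanced DTCBF condition holds (using the conditional
mean and covariance trace of the disturbance), then the expectation DTCBF condition
E[h(F(x,k(x)) + d) | x] ≥ α h(x) holds on C = {x : h(x) ≥ 0}. -/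
theorem jensen_enhanced_dtcbf_implies_expectation_condition {n : ℕ}
    (Fc : EuclideanSpace ℝ (Fin n) → EuclideanSpace ℝ (Fin n))
    (h : EuclideanSpace ℝ (Fin n) → ℝ) (M lamMax : ℝ)
    (hC2 : ContDiff ℝ 2 h)
    (hconc : ConcaveOn ℝ Set.univ h)
    (hbdd : ∀ x, h x ≤ M)
    (hHess : ∀ x, ‖iteratedFDeriv ℝ 2 h x‖ ≤ lamMax)
    (α : ℝ) (hα : α ∈ Set.Ioo (0 : ℝ) 1)
    -- conditional disturbance distribution d | x, with mean `mean x` and covariance `cov x`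
    (ν : EuclideanSpace ℝ (Fin n) → Measure (EuclideanSpace ℝ (Fin n)))
    [∀ x, IsProbabilityMeasure (ν x)]
    (mean : EuclideanSpace ℝ (Fin n) → EuclideanSpace ℝ (Fin n))
    (cov : EuclideanSpace ℝ (Fin n) → Matrix (Fin n) (Fin n) ℝ)
    (hdint : ∀ x, Integrable id (ν x))
    (hmean : ∀ x, mean x = ∫ d, d ∂(ν x))
    (hcov : ∀ x i j, cov x i j = ∫ d, (d i - mean x i) * (d j - mean x j) ∂(ν x))
    (hcovint : ∀ x i j, Integrable (fun d => (d i - mean x i) * (d j - mean x j)) (ν x))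
    (hint : ∀ x, Integrable (fun d => h (Fc x + d)) (ν x))
    (hjensen : ∀ x, h x ≥ 0 →
      h (Fc x + mean x) - lamMax / 2 * Matrix.trace (cov x) ≥ α * h x) :
    ∀ x, h x ≥ 0 → (∫ d, h (Fc x + d) ∂(ν x)) ≥ α * h x := by
  intro x hx
  set μ := ν x
  set m := mean x with hm
  set a := Fc x + m with ha
  set L := fderiv ℝ h a with hL
  -- norm-squared as sum of squares
  have hns : ∀ w : EuclideanSpace ℝ (Fin n), ‖w‖ ^ 2 = ∑ i, (w i) ^ 2 := by
    intro w
    rw [EuclideanSpace.norm_eq, Real.sq_sqrt (Finset.sum_nonneg fun i _ => by positivity)]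
    simp [sq_abs]
  -- pointwise lower bound
  have hpt : ∀ d : EuclideanSpace ℝ (Fin n),
      h a + L (d - m) - lamMax / 2 * ‖d - m‖ ^ 2 ≤ h (Fc x + d) := by
    intro d
    have := taylor_quadratic_lb hC2 hHess a (d - m)
    have he : a + (d - m) = Fc x + d := by rw [ha]; abel
    rwa [he] at this
  -- integrability facts
  have hsub : Integrable (fun d : EuclideanSpace ℝ (Fin n) => d - m) μ := by
    exact (hdint x).sub (integrable_const m)
  have hI1 : Integrable (fun d : EuclideanSpace ℝ (Fin n) => L (d - m)) μ :=
    L.integrable_comp hsub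
  have hsq : ∀ i, Integrable (fun d : EuclideanSpace ℝ (Fin n) => (d i - m i) ^ 2) μ := by
    intro i
    simpa [sq] using hcovint x i i
  have hns2 : ∀ d : EuclideanSpace ℝ (Fin n), ‖d - m‖ ^ 2 = ∑ i, (d i - m i) ^ 2 := by
    intro d
    rw [hns (d - m)]
    exact Finset.sum_congr rfl fun i _ => by simp
  have hI2 : Integrable (fun d : EuclideanSpace ℝ (Fin n) => ‖d - m‖ ^ 2) μ := by
    have heq : (fun d : EuclideanSpace ℝ (Fin n) => ‖d - m‖ ^ 2)
        = fun d => ∑ i, (d i - m i) ^ 2 := funext hns2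
    rw [heq]
    exact integrable_finset_sum _ fun i _ => hsq i
  have hIlow : Integrable
      (fun d : EuclideanSpace ℝ (Fin n) =>
        h a + L (d - m) - lamMax / 2 * ‖d - m‖ ^ 2) μ :=
    ((integrable_const (h a)).add hI1).sub (hI2.const_mul _)
  -- integral of linear part is zero
  have hlin : (∫ d, L (d - m) ∂μ) = 0 := by
    rw [L.integral_comp_comm hsub]
    have hid : Integrable (fun d : EuclideanSpace ℝ (Fin n) => d) μ := hdint x
    have h2 : (∫ d, (d - m) ∂μ) = (∫ d : EuclideanSpace ℝ (Fin n), d ∂μ) - m := by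
      rw [integral_sub hid (integrable_const m)]
      simp
    rw [h2, hm, hmean x]
    simp
    exact sub_self _
  -- integral of quadratic part is the trace
  have hquad : (∫ d, ‖d - m‖ ^ 2 ∂μ) = Matrix.trace (cov x) := by
    have h1 : (∫ d, ‖d - m‖ ^ 2 ∂μ) = ∫ d, ∑ i, (d i - m i) ^ 2 ∂μ := by
      congr 1
      exact funext hns2
    rw [h1, integral_finset_sum _ fun i _ => hsq i]
    rw [Matrix.trace]
    congr 1
    funext i
    rw [Matrix.diag_apply, hcov x i i]
    congr 1
    funext d
    rw [sq]
  -- combine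
  have hIa : Integrable (fun d : EuclideanSpace ℝ (Fin n) => h a + L (d - m)) μ :=
    (integrable_const (h a)).add hI1
  have hIb : Integrable (fun d : EuclideanSpace ℝ (Fin n) => lamMax / 2 * ‖d - m‖ ^ 2) μ :=
    hI2.const_mul _
  have hmono := integral_mono hIlow (hint x) hpt
  have hval : (∫ d, (h a + L (d - m) - lamMax / 2 * ‖d - m‖ ^ 2) ∂μ)
      = h a - lamMax / 2 * Matrix.trace (cov x) := by
    rw [integral_sub hIa hIb, integral_add (integrable_const (h a)) hI1,
        integral_const, integral_const_mul, hlin, hquad]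
    simp
  rw [hval] at hmono
  have hj := hjensen x hx
  calc α * h x ≤ h a - lamMax / 2 * Matrix.trace (cov x) := hj
    _ ≤ ∫ d, h (Fc x + d) ∂μ := hmono
end
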